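/- Under Assumptions 1 and 2, the joint probabilities that both units are always-takers, and that both are never-takers, are identified: P[AT_i ∩ AT_j] = E[D_i · D_j | Z_i=0, Z_j=0] and P[NT_i ∩ NT_j] = E[(1−D_i)(1−D_j) | Z_i=1, Z_j=1]. -/

import Mathlib

open MeasureTheory ProbabilityTheory

noncomputable def bInd (b : Bool) : ℝ := if b then 1 else 0

lemma cond_integral_aux {Ω : Type*} [MeasurableSpace Ω] (P : Measure Ω) [IsProbabilityMeasure P]
    (A s : Set Ω) (hA : MeasurableSet A) (hs : MeasurableSet s) (hspos : P s ≠ 0)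
    (hindep : P (A ∩ s) = P A * P s)
    (f : Ω → ℝ) (hf : ∀ ω ∈ s, f ω = A.indicator (fun _ => (1:ℝ)) ω) :
    ∫ ω, f ω ∂(P[|s]) = (P A).toReal := by
  have hsfin : P s ≠ ⊤ := measure_ne_top P s
  rw [ProbabilityTheory.cond, integral_smul_measure]
  have h1 : ∫ ω in s, f ω ∂P = ∫ ω in s, A.indicator (fun _ => (1:ℝ)) ω ∂P :=
    setIntegral_congr_fun hs hf
  rw [h1, setIntegral_indicator hA, setIntegral_const]
  rw [Set.inter_comm] at hindep
  rw [measureReal_def, hindep]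
  simp only [smul_eq_mul, mul_one, ENNReal.toReal_mul]
  rw [ENNReal.toReal_inv, mul_comm ((P A).toReal), ← mul_assoc, inv_mul_cancel₀ (by
    simp [ENNReal.toReal_ne_zero, hspos, hsfin]), one_mul]

theorem stmt_1
    {Ω : Type*} [MeasurableSpace Ω] (P : Measure Ω) [IsProbabilityMeasure P]
    (Y : Bool → Bool → Ω → ℝ) (Di Dj : Bool → Bool → Ω → Bool)
    (Zi Zj : Ω → Bool)
    (hYmeas : ∀ d d', Measurable (Y d d'))
    (hYint : ∀ d d', Integrable (Y d d') P)
    (hDimeas : ∀ z z', Measurable (Di z z'))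
    (hDjmeas : ∀ z z', Measurable (Dj z z'))
    (hZi : Measurable Zi) (hZj : Measurable Zj)
    (hpos : ∀ z z', 0 < P ({x | Zi x = z} ∩ {x | Zj x = z'}))
    (hIV : IndepFun
      (fun ω => ((fun d d' => Y d d' ω),
                 (fun z z' => Di z z' ω),
                 (fun z z' => Dj z z' ω)))
      (fun ω => (Zi ω, Zj ω)) P)
    (hmono : ∀ᵐ ω ∂P,
      (Di false false ω ≤ Di false true ω ∧ Di false true ω ≤ Di true false ω ∧
        Di true false ω ≤ Di true true ω) ∧
      (Dj false false ω ≤ Dj false true ω ∧ Dj false true ω ≤ Dj true false ω ∧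
        Dj true false ω ≤ Dj true true ω))
    :
    (P ({x | Di false false x = true} ∩ {x | Dj false false x = true})).toReal = (∫ ω, bInd (Di (Zi ω) (Zj ω) ω) * bInd (Dj (Zj ω) (Zi ω) ω) ∂(P[|({x | Zi x = false} ∩ {x | Zj x = false})]))
    ∧ (P ({x | Di true true x = false} ∩ {x | Dj true true x = false})).toReal = (∫ ω, (1 - bInd (Di (Zi ω) (Zj ω) ω)) * (1 - bInd (Dj (Zj ω) (Zi ω) ω)) ∂(P[|({x | Zi x = true} ∩ {x | Zj x = true})])) := by
  -- general independence consequence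
  have hind : ∀ (zi zj di dj : Bool) (z z' : Bool),
      P (({x | Di z z' x = di} ∩ {x | Dj z z' x = dj}) ∩ ({x | Zi x = zi} ∩ {x | Zj x = zj}))
        = P ({x | Di z z' x = di} ∩ {x | Dj z z' x = dj}) * P ({x | Zi x = zi} ∩ {x | Zj x = zj}) := by
    intro zi zj di dj z z'
    have hSA : MeasurableSet {p : (Bool → Bool → ℝ) × (Bool → Bool → Bool) × (Bool → Bool → Bool) |
        p.2.1 z z' = di ∧ p.2.2 z z' = dj} := by
      have h1 : Measurable fun p : (Bool → Bool → ℝ) × (Bool → Bool → Bool) × (Bool → Bool → Bool)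
          => p.2.1 z z' := (measurable_pi_apply z').comp
            ((measurable_pi_apply z).comp (measurable_fst.comp measurable_snd))
      have h2 : Measurable fun p : (Bool → Bool → ℝ) × (Bool → Bool → Bool) × (Bool → Bool → Bool)
          => p.2.2 z z' := (measurable_pi_apply z').comp
            ((measurable_pi_apply z).comp (measurable_snd.comp measurable_snd))
      exact (h1 (measurableSet_singleton di)).inter (h2 (measurableSet_singleton dj))
    have hSB : MeasurableSet {p : Bool × Bool | p.1 = zi ∧ p.2 = zj} :=
      (measurable_fst (measurableSet_singleton zi)).inter
        (measurable_snd (measurableSet_singleton zj))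
    have := hIV.measure_inter_preimage_eq_mul _ _ hSA hSB
    simpa [Set.preimage, Set.inter_def, Set.mem_setOf_eq] using this
  constructor
  · refine (cond_integral_aux P _ _ (((hDimeas false false) (measurableSet_singleton true)).inter
      ((hDjmeas false false) (measurableSet_singleton true)))
      ((hZi (measurableSet_singleton false)).inter (hZj (measurableSet_singleton false)))
      (hpos false false).ne' (hind false false true true false false) _ ?_).symm
    rintro ω ⟨h1, h2⟩
    replace h1 : Zi ω = _ := h1
    replace h2 : Zj ω = _ := h2
    rw [h1, h2]
    rcases Bool.eq_false_or_eq_true (Di false false ω) with h | h <;>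
      rcases Bool.eq_false_or_eq_true (Dj false false ω) with h' | h' <;>
      simp [bInd, h, h', Set.indicator_apply, Set.mem_inter_iff, Set.mem_setOf_eq]
  · refine (cond_integral_aux P _ _ (((hDimeas true true) (measurableSet_singleton false)).inter
      ((hDjmeas true true) (measurableSet_singleton false)))
      ((hZi (measurableSet_singleton true)).inter (hZj (measurableSet_singleton true)))
      (hpos true true).ne' (hind true true false false true true) _ ?_).symm
    rintro ω ⟨h1, h2⟩
    replace h1 : Zi ω = _ := h1
    replace h2 : Zj ω = _ := h2
    rw [h1, h2]
    rcases Bool.eq_false_or_eq_true (Di true true ω) with h | h <;>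
      rcases Bool.eq_false_or_eq_true (Dj true true ω) with h' | h' <;>
      simp [bInd, h, h', Set.indicator_apply, Set.mem_inter_iff, Set.mem_setOf_eq]
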